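/- arXiv:2601.22106 — 7 statements merged into one kernel-verified Lean document; each statement's English description precedes it below -/
import Mathlib

section
/- If S is a singular symmetric positive semidefinite d×d matrix, then the function f_S(Q) = tr(S Q) − log(det Q) is unbounded from below on the cone of symmetric positive definite matrices. -/
open Matrix

/-- The Gaussian graphical loss `f_S(Q) = tr(S Q) − log (det Q)`. -/
noncomputable def gaussLoss {d : ℕ} (S Q : Matrix (Fin d) (Fin d) ℝ) : ℝ :=
  (S * Q).trace - Real.log Q.det

/-- If `S` is a singular symmetric positive semidefinite matrix, then `f_S` is
unbounded from below on the cone of symmetric positive definite matrices. -/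
theorem stmt_2 {d : ℕ} (S : Matrix (Fin d) (Fin d) ℝ) (hS : S.PosSemidef)
    (hsing : S.det = 0) :
    ∀ M : ℝ, ∃ Q : Matrix (Fin d) (Fin d) ℝ, Q.PosDef ∧ gaussLoss S Q < M := by
  intro M
  obtain ⟨v, hv0, hvS⟩ := (Matrix.exists_mulVec_eq_zero_iff).2 hsing
  have hc : 0 < v ⬝ᵥ v := by
    have h := Matrix.dotProduct_star_self_pos_iff (v := v)
    simpa [star_trivial] using h.2 hv0
  set c : ℝ := v ⬝ᵥ v with hcdef
  set t : ℝ := Real.exp (S.trace - M) / c with htdef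
  have ht : 0 < t := div_pos (Real.exp_pos _) hc
  set w : Fin d → ℝ := Real.sqrt t • v with hwdef
  set Q : Matrix (Fin d) (Fin d) ℝ := 1 + vecMulVec w w with hQdef
  have hww : w ⬝ᵥ w = t * c := by
    rw [hwdef, smul_dotProduct, dotProduct_smul, smul_smul, smul_eq_mul,
      Real.mul_self_sqrt ht.le]
  have hwsd : (vecMulVec w w).PosSemidef := by
    rw [vecMulVec_eq Unit]
    have h := Matrix.posSemidef_self_mul_conjTranspose (replicateCol Unit w)
    rwa [conjTranspose_replicateCol, star_trivial] at h
  have hQpd : Q.PosDef := Matrix.PosDef.add_posSemidef Matrix.PosDef.one hwsd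
  have hSw : S *ᵥ w = 0 := by
    rw [hwdef, Matrix.mulVec_smul, hvS, smul_zero]
  have hSvv : S * vecMulVec w w = 0 := by
    ext i j
    simp only [Matrix.mul_apply, vecMulVec_apply, Matrix.zero_apply]
    have : ∑ k, S i k * (w k * w j) = (∑ k, S i k * w k) * w j := by
      rw [Finset.sum_mul]; congr 1; ext k; ring
    rw [this]
    have h0 : ∑ k, S i k * w k = 0 := by
      have := congrFun hSw i
      simpa [Matrix.mulVec, dotProduct] using this
    rw [h0, zero_mul]
  have htr : (S * Q).trace = S.trace := by
    rw [hQdef, Matrix.mul_add, Matrix.mul_one, hSvv, add_zero]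
  have hdet : Q.det = 1 + t * c := by
    rw [hQdef, vecMulVec_eq Unit, Matrix.det_one_add_replicateCol_mul_replicateRow, hww]
  have hE : t * c = Real.exp (S.trace - M) := by
    rw [htdef]; field_simp
  refine ⟨Q, hQpd, ?_⟩
  rw [gaussLoss, htr, hdet, hE]
  have hlog : S.trace - M < Real.log (1 + Real.exp (S.trace - M)) := by
    calc S.trace - M = Real.log (Real.exp (S.trace - M)) := (Real.log_exp _).symm
      _ < Real.log (1 + Real.exp (S.trace - M)) :=
        Real.log_lt_log (Real.exp_pos _) (by linarith [Real.exp_pos (S.trace - M)])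
  linarith
end

section
/- Let S be symmetric positive definite. For any sequence (Q_k) of symmetric positive definite matrices whose largest eigenvalues tend to +∞, the values f_S(Q_k) = tr(S Q_k) − log(det Q_k) tend to +∞. -/
open Matrix Filter

lemma aux_trace_nonneg {n : Type*} [Fintype n] [DecidableEq n] {M : Matrix n n ℝ}
    (hM : M.PosSemidef) : 0 ≤ M.trace := by
  refine Finset.sum_nonneg fun i _ => ?_
  simpa using hM.2 (Finsupp.single i 1)

lemma aux_trace_mul_nonneg {n : Type*} [Fintype n] [DecidableEq n] {A B : Matrix n n ℝ}
    (hA : A.PosSemidef) (hB : B.PosSemidef) : 0 ≤ (A * B).trace := by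
  open scoped MatrixOrder in obtain ⟨C, rfl⟩ := CStarAlgebra.nonneg_iff_eq_star_mul_self.mp hB.nonneg
  rw [← mul_assoc, Matrix.trace_mul_cycle]
  exact aux_trace_nonneg (hA.mul_mul_conjTranspose_same C)

lemma aux_trace_eq_sum_eigenvalues {n : Type*} [Fintype n] [DecidableEq n]
    {A : Matrix n n ℝ} (hA : A.IsHermitian) :
    A.trace = ∑ i, hA.eigenvalues i := by
  conv_lhs => rw [hA.spectral_theorem, Unitary.conjStarAlgAut_apply]
  rw [Matrix.trace_mul_cycle,
    Matrix.mem_unitaryGroup_iff'.mp (hA.eigenvectorUnitary).2, one_mul, trace_diagonal]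
  simp [RCLike.ofReal_real_eq_id]

lemma aux_pointwise {c x : ℝ} (hc : 0 < c) (hx : 0 < x) :
    c / 2 * x + (1 + Real.log (c / 2)) ≤ c * x - Real.log x := by
  have h := Real.log_le_sub_one_of_pos (show (0:ℝ) < c / 2 * x by positivity)
  rw [Real.log_mul (show c / 2 ≠ 0 by positivity) hx.ne'] at h
  linarith

/-- If `S` is symmetric positive definite and `(Q k)` is a sequence of symmetric
positive definite matrices with `λ_max (Q k) → +∞`, then `f_S (Q k) → +∞`. -/
theorem stmt_3 {d : ℕ} (hd : 0 < d) (S : Matrix (Fin d) (Fin d) ℝ) (hS : S.PosDef)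
    (Q : ℕ → Matrix (Fin d) (Fin d) ℝ) (hQ : ∀ k, (Q k).PosDef)
    (hmax : Tendsto (fun k => ⨆ i, (hQ k).1.eigenvalues i) atTop atTop) :
    Tendsto (fun k => gaussLoss S (Q k)) atTop atTop := by
  haveI : Nonempty (Fin d) := Fin.pos_iff_nonempty.mp hd
  set c : ℝ := Finset.univ.inf' Finset.univ_nonempty hS.1.eigenvalues with hc_def
  have hc : 0 < c := by
    rw [hc_def, Finset.lt_inf'_iff]
    exact fun i _ => hS.eigenvalues_pos i
  -- `S - c • 1` is positive semidefinite
  have hSc : (S - c • (1 : Matrix (Fin d) (Fin d) ℝ)).PosSemidef := by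
    have hpsd : ((hS.1.eigenvectorUnitary : Matrix (Fin d) (Fin d) ℝ) *
        diagonal (fun i => hS.1.eigenvalues i - c) *
        (star (hS.1.eigenvectorUnitary : Matrix (Fin d) (Fin d) ℝ))).PosSemidef := by
      rw [show (star (hS.1.eigenvectorUnitary : Matrix (Fin d) (Fin d) ℝ)) =
        (hS.1.eigenvectorUnitary : Matrix (Fin d) (Fin d) ℝ)ᴴ from rfl]
      refine Matrix.PosSemidef.mul_mul_conjTranspose_same ?_ _
      refine Matrix.PosSemidef.diagonal fun i => ?_
      simp only [Pi.zero_apply, sub_nonneg]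
      exact Finset.inf'_le _ (Finset.mem_univ i)
    have key : S - c • (1 : Matrix (Fin d) (Fin d) ℝ) =
        (hS.1.eigenvectorUnitary : Matrix (Fin d) (Fin d) ℝ) *
          diagonal (fun i => hS.1.eigenvalues i - c) *
          (star (hS.1.eigenvectorUnitary : Matrix (Fin d) (Fin d) ℝ)) := by
      have h1 : (diagonal (fun i => hS.1.eigenvalues i - c) :
          Matrix (Fin d) (Fin d) ℝ) =
          diagonal (RCLike.ofReal ∘ hS.1.eigenvalues) - c • 1 := by
        rw [smul_one_eq_diagonal, ← diagonal_sub]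
        simp [RCLike.ofReal_real_eq_id, Function.comp]
      rw [h1, Matrix.mul_sub, Matrix.sub_mul]
      rw [← Unitary.conjStarAlgAut_apply (S := ℝ), ← hS.1.spectral_theorem]
      congr 1
      rw [Matrix.mul_smul, Matrix.smul_mul, Matrix.mul_one,
        Matrix.mem_unitaryGroup_iff.mp (hS.1.eigenvectorUnitary).2]
    rw [key]
    exact hpsd
  -- main lower bound
  have hbound : ∀ k, c / 2 * (⨆ i, (hQ k).1.eigenvalues i)
      + d * (1 + Real.log (c / 2)) ≤ gaussLoss S (Q k) := by
    intro k
    set lam := (hQ k).1.eigenvalues with hlam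
    have hlampos : ∀ i, 0 < lam i := fun i => (hQ k).eigenvalues_pos i
    -- trace inequality
    have htr : c * (Q k).trace ≤ (S * Q k).trace := by
      have h := aux_trace_mul_nonneg hSc (hQ k).posSemidef
      rw [Matrix.sub_mul, Matrix.trace_sub, Matrix.smul_mul, Matrix.one_mul,
        Matrix.trace_smul, smul_eq_mul] at h
      linarith
    have htrQ : (Q k).trace = ∑ i, lam i := aux_trace_eq_sum_eigenvalues (hQ k).1
    have hdet : Real.log (Q k).det = ∑ i, Real.log (lam i) := by
      have h := (hQ k).1.det_eq_prod_eigenvalues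
      rw [RCLike.ofReal_real_eq_id] at h
      simp only [id] at h
      rw [h, Real.log_prod fun i _ => (hlampos i).ne']
    -- the supremum is attained
    obtain ⟨i0, hi0⟩ := Finite.exists_max lam
    have hM : (⨆ i, lam i) = lam i0 :=
      le_antisymm (ciSup_le hi0) (le_ciSup (Set.Finite.bddAbove (Set.finite_range _)) i0)
    have step1 : ∑ i, (c / 2 * lam i + (1 + Real.log (c / 2)))
        ≤ ∑ i, (c * lam i - Real.log (lam i)) :=
      Finset.sum_le_sum fun i _ => aux_pointwise hc (hlampos i)
    have step2 : c / 2 * lam i0 ≤ ∑ i, c / 2 * lam i :=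
      Finset.single_le_sum (f := fun i => c / 2 * lam i) (fun i _ => mul_nonneg (by positivity) (hlampos i).le) (Finset.mem_univ i0)
    have expand : ∑ i, (c / 2 * lam i + (1 + Real.log (c / 2)))
        = (∑ i, c / 2 * lam i) + d * (1 + Real.log (c / 2)) := by
      rw [Finset.sum_add_distrib, Finset.sum_const, Finset.card_univ, Fintype.card_fin,
        nsmul_eq_mul]
    have expand2 : ∑ i, (c * lam i - Real.log (lam i))
        = c * (∑ i, lam i) - ∑ i, Real.log (lam i) := by
      rw [Finset.sum_sub_distrib, Finset.mul_sum]
    rw [gaussLoss, hdet, hM]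
    calc c / 2 * lam i0 + d * (1 + Real.log (c / 2))
        ≤ (∑ i, c / 2 * lam i) + d * (1 + Real.log (c / 2)) := by linarith
      _ = ∑ i, (c / 2 * lam i + (1 + Real.log (c / 2))) := expand.symm
      _ ≤ ∑ i, (c * lam i - Real.log (lam i)) := step1
      _ = c * (∑ i, lam i) - ∑ i, Real.log (lam i) := expand2
      _ = c * (Q k).trace - ∑ i, Real.log (lam i) := by rw [htrQ]
      _ ≤ (S * Q k).trace - ∑ i, Real.log (lam i) := by linarith
  refine tendsto_atTop_mono hbound ?_
  exact tendsto_atTop_add_const_right _ _ (hmax.const_mul_atTop (by positivity))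
end

section
/- For symmetric positive definite matrices Q₁ and Q₂ whose smallest eigenvalues are both at least λ > 0, the gradients of f_S satisfy ‖∇f_S(Q₁) − ∇f_S(Q₂)‖_F ≤ ‖Q₁ − Q₂‖_F / λ², where ∇f_S(Q) = S − Q⁻¹. -/
open Matrix

/-- The Frobenius norm of a real matrix. -/
noncomputable def frobNorm {d : ℕ} (A : Matrix (Fin d) (Fin d) ℝ) : ℝ :=
  Real.sqrt (∑ i, ∑ j, (A i j) ^ 2)

section aux

variable {d : ℕ}

/-- squared Frobenius norm -/
noncomputable def F2 (A : Matrix (Fin d) (Fin d) ℝ) : ℝ := ∑ i, ∑ j, (A i j) ^ 2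

lemma F2_nonneg (A : Matrix (Fin d) (Fin d) ℝ) : 0 ≤ F2 A :=
  Finset.sum_nonneg fun _ _ => Finset.sum_nonneg fun _ _ => sq_nonneg _

lemma F2_transpose (A : Matrix (Fin d) (Fin d) ℝ) : F2 Aᵀ = F2 A := by
  unfold F2
  rw [Finset.sum_comm]
  simp [Matrix.transpose_apply]

lemma quad {Q : Matrix (Fin d) (Fin d) ℝ} (hQ : Q.PosDef) {lam : ℝ}
    (hlam : 0 ≤ lam) (h : ∀ i, lam ≤ hQ.1.eigenvalues i) (x : Fin d → ℝ) :
    lam ^ 2 * (x ⬝ᵥ x) ≤ (Q *ᵥ x) ⬝ᵥ (Q *ᵥ x) := by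
  have hH := hQ.1
  set U : Matrix (Fin d) (Fin d) ℝ := ↑hH.eigenvectorUnitary with hU
  have hUU : star U * U = 1 := Unitary.coe_star_mul_self hH.eigenvectorUnitary
  have hUU' : U * star U = 1 := Unitary.coe_mul_star_self hH.eigenvectorUnitary
  have hspec : Q = U * Matrix.diagonal (RCLike.ofReal ∘ hH.eigenvalues) * star U :=
    hH.spectral_theorem
  rw [RCLike.ofReal_real_eq_id] at hspec
  set D : Matrix (Fin d) (Fin d) ℝ := Matrix.diagonal (id ∘ hH.eigenvalues) with hD
  have hQQ : Q * Q = U * (D * D) * star U := by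
    rw [hspec]
    calc U * D * star U * (U * D * star U)
        = U * (D * ((star U * U) * (D * star U))) := by
          simp only [Matrix.mul_assoc]
      _ = U * (D * D) * star U := by
          rw [hUU, Matrix.one_mul]; simp only [Matrix.mul_assoc]
  have hRdec : Q * Q - lam ^ 2 • (1 : Matrix (Fin d) (Fin d) ℝ)
      = U * Matrix.diagonal (fun i => hH.eigenvalues i ^ 2 - lam ^ 2) * star U := by
    have h1 : lam ^ 2 • (1 : Matrix (Fin d) (Fin d) ℝ)
        = U * (lam ^ 2 • (1 : Matrix (Fin d) (Fin d) ℝ)) * star U := by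
      rw [Matrix.mul_smul, Matrix.smul_mul, mul_one, hUU']
    have h2 : D * D - lam ^ 2 • (1 : Matrix (Fin d) (Fin d) ℝ)
        = Matrix.diagonal (fun i => hH.eigenvalues i ^ 2 - lam ^ 2) := by
      rw [hD, Matrix.diagonal_mul_diagonal, Matrix.smul_one_eq_diagonal, Matrix.diagonal_sub]
      funext i; simp [sq]
    rw [hQQ, h1, ← h2]
    noncomm_ring
  have hR : (Q * Q - lam ^ 2 • (1 : Matrix (Fin d) (Fin d) ℝ)).PosSemidef := by
    rw [hRdec]
    exact (Matrix.posSemidef_diagonal_iff.mpr fun i => by nlinarith [h i]).mul_mul_conjTranspose_same U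
  have hpos := hR.dotProduct_mulVec_nonneg x
  have hstar : star x = x := by simp
  rw [hstar] at hpos
  have hexp : x ⬝ᵥ ((Q * Q - lam ^ 2 • (1 : Matrix (Fin d) (Fin d) ℝ)) *ᵥ x)
      = (Q *ᵥ x) ⬝ᵥ (Q *ᵥ x) - lam ^ 2 * (x ⬝ᵥ x) := by
    rw [Matrix.sub_mulVec, dotProduct_sub]
    congr 1
    · rw [← Matrix.mulVec_mulVec, Matrix.dotProduct_mulVec, ← Matrix.mulVec_transpose]
      have : Qᵀ = Q := by
        have := hH.eq
        rwa [Matrix.conjTranspose_eq_transpose_of_trivial] at this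
      rw [this]
    · rw [Matrix.smul_mulVec, Matrix.one_mulVec, dotProduct_smul, smul_eq_mul]
  rw [hexp] at hpos
  linarith

lemma dot_self_eq (x : Fin d → ℝ) : x ⬝ᵥ x = ∑ i, (x i) ^ 2 := by
  simp [dotProduct, sq]

/-- left multiplication by inverse bound -/
lemma left_bound {Q : Matrix (Fin d) (Fin d) ℝ} (hQ : Q.PosDef) {lam : ℝ}
    (hlam : 0 ≤ lam) (h : ∀ i, lam ≤ hQ.1.eigenvalues i)
    (N : Matrix (Fin d) (Fin d) ℝ) :
    lam ^ 2 * F2 (Q⁻¹ * N) ≤ F2 N := by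
  have hinv : ∀ v : Fin d → ℝ, Q *ᵥ (Q⁻¹ *ᵥ v) = v := by
    intro v
    rw [Matrix.mulVec_mulVec, Matrix.mul_nonsing_inv _ (isUnit_iff_ne_zero.mpr hQ.det_pos.ne'), Matrix.one_mulVec]
  have key : ∀ v : Fin d → ℝ, lam ^ 2 * ((Q⁻¹ *ᵥ v) ⬝ᵥ (Q⁻¹ *ᵥ v)) ≤ v ⬝ᵥ v := by
    intro v
    have := quad hQ hlam h (Q⁻¹ *ᵥ v)
    rwa [hinv v] at this
  unfold F2
  rw [Finset.sum_comm, Finset.sum_comm (s := Finset.univ) (t := Finset.univ)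
    (f := fun i j => (N i j) ^ 2), Finset.mul_sum]
  apply Finset.sum_le_sum
  intro j _
  have hcol : ∀ i, (Q⁻¹ * N) i j = (Q⁻¹ *ᵥ fun k => N k j) i := by
    intro i; simp [Matrix.mul_apply, Matrix.mulVec, dotProduct]
  have hsum : ∑ i, ((Q⁻¹ * N) i j) ^ 2
      = (Q⁻¹ *ᵥ fun k => N k j) ⬝ᵥ (Q⁻¹ *ᵥ fun k => N k j) := by
    rw [dot_self_eq]; exact Finset.sum_congr rfl fun i _ => by rw [hcol i]
  calc lam ^ 2 * ∑ i, ((Q⁻¹ * N) i j) ^ 2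
      = lam ^ 2 * ((Q⁻¹ *ᵥ fun k => N k j) ⬝ᵥ (Q⁻¹ *ᵥ fun k => N k j)) := by
        rw [hsum]
    _ ≤ (fun k => N k j) ⬝ᵥ (fun k => N k j) := key _
    _ = ∑ i, (N i j) ^ 2 := dot_self_eq _

end aux

/-- For symmetric positive definite `Q₁, Q₂` whose smallest eigenvalues are at
least `λ > 0`, the gradients `∇f_S(Q) = S − Q⁻¹` of the Gaussian graphical loss
satisfy `‖∇f_S(Q₁) − ∇f_S(Q₂)‖_F ≤ ‖Q₁ − Q₂‖_F / λ²`. -/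
theorem stmt_5 {d : ℕ} (S : Matrix (Fin d) (Fin d) ℝ) (hS : S.PosSemidef)
    (Q₁ Q₂ : Matrix (Fin d) (Fin d) ℝ) (hQ₁ : Q₁.PosDef) (hQ₂ : Q₂.PosDef)
    (lam : ℝ) (hlam : 0 < lam)
    (h₁ : ∀ i, lam ≤ hQ₁.1.eigenvalues i) (h₂ : ∀ i, lam ≤ hQ₂.1.eigenvalues i) :
    frobNorm ((S - Q₁⁻¹) - (S - Q₂⁻¹)) ≤ frobNorm (Q₁ - Q₂) / lam ^ 2 := by
  have hd1 : IsUnit Q₁.det := isUnit_iff_ne_zero.mpr hQ₁.det_pos.ne'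
  have hd2 : IsUnit Q₂.det := isUnit_iff_ne_zero.mpr hQ₂.det_pos.ne'
  set M := Q₁ - Q₂ with hMdef
  have hsym2 : Q₂ᵀ = Q₂ := by
    have := hQ₂.1.eq
    rwa [Matrix.conjTranspose_eq_transpose_of_trivial] at this
  have hM : (S - Q₁⁻¹) - (S - Q₂⁻¹) = Q₁⁻¹ * (M * Q₂⁻¹) := by
    have : Q₁⁻¹ * (M * Q₂⁻¹) = Q₂⁻¹ - Q₁⁻¹ := by
      rw [hMdef, Matrix.sub_mul, Matrix.mul_sub, ← Matrix.mul_assoc, ← Matrix.mul_assoc,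
        Matrix.nonsing_inv_mul _ hd1, Matrix.one_mul, Matrix.mul_assoc,
        Matrix.mul_nonsing_inv _ hd2, Matrix.mul_one]
    rw [this, sub_sub_sub_cancel_left]
  have ht : (M * Q₂⁻¹)ᵀ = Q₂⁻¹ * Mᵀ := by
    rw [Matrix.transpose_mul, Matrix.transpose_nonsing_inv, hsym2]
  have ineq1 : lam ^ 2 * F2 (Q₁⁻¹ * (M * Q₂⁻¹)) ≤ F2 (M * Q₂⁻¹) :=
    left_bound hQ₁ hlam.le h₁ _
  have ineq2 : lam ^ 2 * F2 (Q₂⁻¹ * Mᵀ) ≤ F2 Mᵀ := left_bound hQ₂ hlam.le h₂ _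
  have hF2eq : F2 (M * Q₂⁻¹) = F2 (Q₂⁻¹ * Mᵀ) := by rw [← ht, F2_transpose]
  have hmain : F2 (Q₁⁻¹ * (M * Q₂⁻¹)) * (lam ^ 2) ^ 2 ≤ F2 M := by
    have h4 : lam ^ 2 * (lam ^ 2 * F2 (Q₁⁻¹ * (M * Q₂⁻¹))) ≤ lam ^ 2 * F2 (M * Q₂⁻¹) := by
      exact mul_le_mul_of_nonneg_left ineq1 (by positivity)
    rw [hF2eq] at h4
    have := h4.trans ineq2
    rw [F2_transpose] at this
    nlinarith [this]
  have hL : frobNorm ((S - Q₁⁻¹) - (S - Q₂⁻¹)) = Real.sqrt (F2 (Q₁⁻¹ * (M * Q₂⁻¹))) := by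
    rw [hM]; rfl
  have hR : frobNorm (Q₁ - Q₂) = Real.sqrt (F2 M) := rfl
  rw [hL, hR, le_div_iff₀ (by positivity : (0:ℝ) < lam ^ 2)]
  calc Real.sqrt (F2 (Q₁⁻¹ * (M * Q₂⁻¹))) * lam ^ 2
      = Real.sqrt (F2 (Q₁⁻¹ * (M * Q₂⁻¹)) * (lam ^ 2) ^ 2) := by
        rw [Real.sqrt_mul (F2_nonneg _), Real.sqrt_sq (by positivity)]
    _ ≤ Real.sqrt (F2 M) := Real.sqrt_le_sqrt hmain
end

section
/- For symmetric positive definite matrices Q₁ and Q₂ whose largest eigenvalues are both at most Λ, one has ⟨∇f_S(Q₁) − ∇f_S(Q₂), Q₁ − Q₂⟩_F ≥ ‖Q₁ − Q₂‖_F² / Λ², where ∇f_S(Q) = S − Q⁻¹ and ⟨A,B⟩_F = tr(AᵀB). -/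
open Matrix


lemma trace_mul_psd_nonneg {d : ℕ} {A B : Matrix (Fin d) (Fin d) ℝ}
    (hA : A.PosSemidef) (hB : B.PosSemidef) : 0 ≤ (A * B).trace := by
  obtain ⟨C, rfl⟩ : ∃ C : Matrix (Fin d) (Fin d) ℝ, A = Cᴴ * C := by
    open scoped MatrixOrder Matrix.Norms.L2Operator in
    obtain ⟨C, rfl⟩ := CStarAlgebra.nonneg_iff_eq_star_mul_self.mp hA.nonneg
    exact ⟨C, rfl⟩
  obtain ⟨E, rfl⟩ : ∃ E : Matrix (Fin d) (Fin d) ℝ, B = Eᴴ * E := by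
    open scoped MatrixOrder Matrix.Norms.L2Operator in
    obtain ⟨E, rfl⟩ := CStarAlgebra.nonneg_iff_eq_star_mul_self.mp hB.nonneg
    exact ⟨E, rfl⟩
  have h1 : ((C * Eᴴ)ᴴ * (C * Eᴴ)).trace = (Cᴴ * C * (Eᴴ * E)).trace := by
    calc ((C * Eᴴ)ᴴ * (C * Eᴴ)).trace
        = (E * (Cᴴ * (C * Eᴴ))).trace := by
          rw [conjTranspose_mul, conjTranspose_conjTranspose, mul_assoc]
      _ = ((Cᴴ * (C * Eᴴ)) * E).trace := trace_mul_comm _ _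
      _ = (Cᴴ * C * (Eᴴ * E)).trace := by rw [mul_assoc, mul_assoc, mul_assoc]
  rw [← h1]
  set M := C * Eᴴ
  have h2 : (Mᴴ * M).trace = ∑ i, ∑ j, (M j i) ^ 2 := by
    simp [trace, Matrix.mul_apply, conjTranspose_apply, sq, Matrix.diag]
  rw [h2]
  positivity

lemma inv_sub_smul_psd {d : ℕ} {Q : Matrix (Fin d) (Fin d) ℝ} (hQ : Q.PosDef)
    {Lam : ℝ} (hLam : 0 < Lam) (h : ∀ i, hQ.1.eigenvalues i ≤ Lam) :
    (Q⁻¹ - Lam⁻¹ • 1).PosSemidef := by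
  set U : Matrix (Fin d) (Fin d) ℝ := (hQ.1.eigenvectorUnitary : Matrix (Fin d) (Fin d) ℝ) with hU
  have hUU : star U * U = 1 := Unitary.coe_star_mul_self _
  have hUU' : U * star U = 1 := Unitary.coe_mul_star_self _
  have hdiag : diagonal (RCLike.ofReal ∘ hQ.1.eigenvalues) =
      (diagonal hQ.1.eigenvalues : Matrix (Fin d) (Fin d) ℝ) := by
    congr 1
  obtain ⟨v, hvpos, hvle, hspec⟩ :
      ∃ v : Fin d → ℝ, (∀ i, 0 < v i) ∧ (∀ i, v i ≤ Lam) ∧ Q = U * diagonal v * star U := by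
    refine ⟨hQ.1.eigenvalues, hQ.eigenvalues_pos, h, ?_⟩
    have := hQ.1.spectral_theorem
    rw [hdiag] at this
    exact this
  have hinv : Q⁻¹ = U * diagonal (fun i => (v i)⁻¹) * star U := by
    apply inv_eq_right_inv
    rw [hspec]
    calc U * diagonal v * star U * (U * diagonal (fun i => (v i)⁻¹) * star U)
        = U * diagonal v * (star U * U) * diagonal (fun i => (v i)⁻¹) * star U := by
          simp only [mul_assoc]
      _ = U * (diagonal v * diagonal (fun i => (v i)⁻¹)) * star U := by
          rw [hUU]; simp only [mul_one, mul_assoc]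
      _ = 1 := by
          rw [diagonal_mul_diagonal]
          have : (fun i => v i * (v i)⁻¹) = fun _ => (1:ℝ) := by
            funext i; exact mul_inv_cancel₀ (hvpos i).ne'
          rw [this, diagonal_one, mul_one, hUU']
  have hone : (Lam⁻¹ • (1 : Matrix (Fin d) (Fin d) ℝ)) = U * diagonal (fun _ => Lam⁻¹) * star U := by
    rw [smul_one_eq_diagonal]
    calc (diagonal (fun _ => Lam⁻¹) : Matrix (Fin d) (Fin d) ℝ)
        = U * star U * diagonal (fun _ => Lam⁻¹) := by rw [hUU', one_mul]
      _ = U * diagonal (fun _ => Lam⁻¹) * star U := by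
          rw [mul_assoc, mul_assoc]
          congr 1
          rw [← smul_one_eq_diagonal, Matrix.mul_smul, Matrix.smul_mul, mul_one, one_mul]
  rw [hinv, hone]
  have hsub : U * diagonal (fun i => (v i)⁻¹) * star U - U * diagonal (fun _ => Lam⁻¹) * star U
      = U * diagonal (fun i => (v i)⁻¹ - Lam⁻¹) * star U := by
    have hd : (diagonal (fun i => (v i)⁻¹ - Lam⁻¹) : Matrix (Fin d) (Fin d) ℝ)
        = diagonal (fun i => (v i)⁻¹) - diagonal (fun _ => Lam⁻¹) := by
      rw [← diagonal_sub]
    rw [hd, Matrix.mul_sub, Matrix.sub_mul]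
  rw [hsub, Matrix.star_eq_conjTranspose]
  apply Matrix.PosSemidef.mul_mul_conjTranspose_same
  apply Matrix.PosSemidef.diagonal
  intro i
  have := inv_anti₀ (hvpos i) (hvle i)
  simp only [Pi.sub_apply, Pi.zero_apply]
  linarith

/-- The Frobenius inner product `⟨A, B⟩_F = tr(Aᵀ B)`. -/
def frobInner {d : ℕ} (A B : Matrix (Fin d) (Fin d) ℝ) : ℝ :=
  (Aᵀ * B).trace

/-- For symmetric positive definite `Q₁, Q₂` whose largest eigenvalues are at
most `Λ`, one has `⟨∇f_S(Q₁) − ∇f_S(Q₂), Q₁ − Q₂⟩_F ≥ ‖Q₁ − Q₂‖_F² / Λ²`, where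
`∇f_S(Q) = S − Q⁻¹`. -/
theorem stmt_6 {d : ℕ} (S : Matrix (Fin d) (Fin d) ℝ) (hS : S.PosSemidef)
    (Q₁ Q₂ : Matrix (Fin d) (Fin d) ℝ) (hQ₁ : Q₁.PosDef) (hQ₂ : Q₂.PosDef)
    (Lam : ℝ) (hLam : 0 < Lam)
    (h₁ : ∀ i, hQ₁.1.eigenvalues i ≤ Lam) (h₂ : ∀ i, hQ₂.1.eigenvalues i ≤ Lam) :
    frobNorm (Q₁ - Q₂) ^ 2 / Lam ^ 2
      ≤ frobInner ((S - Q₁⁻¹) - (S - Q₂⁻¹)) (Q₁ - Q₂) := by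
  set D := Q₁ - Q₂ with hD
  have htr : ∀ (M : Matrix (Fin d) (Fin d) ℝ), M.PosDef → Mᵀ = M := by
    intro M hM
    rw [← conjTranspose_eq_transpose_of_trivial]
    exact hM.1
  have hDsym : Dᵀ = D := by rw [hD, transpose_sub, htr _ hQ₁, htr _ hQ₂]
  have hDH : Dᴴ = D := by rw [conjTranspose_eq_transpose_of_trivial, hDsym]
  have hX : Q₁⁻¹.PosDef := hQ₁.inv
  have hY : Q₂⁻¹.PosDef := hQ₂.inv
  have hsymm : ∀ i j, D j i = D i j := by
    intro i j
    have := congrFun (congrFun hDsym i) j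
    simpa [transpose_apply] using this
  have hinner : frobInner ((S - Q₁⁻¹) - (S - Q₂⁻¹)) D = ((Q₂⁻¹ - Q₁⁻¹) * D).trace := by
    unfold frobInner
    have h0 : (S - Q₁⁻¹) - (S - Q₂⁻¹) = Q₂⁻¹ - Q₁⁻¹ := by abel
    rw [h0, transpose_sub, htr _ hX, htr _ hY]
  have hid : Q₂⁻¹ - Q₁⁻¹ = Q₁⁻¹ * D * Q₂⁻¹ := by
    have h1 : Q₁⁻¹ * Q₁ = 1 := nonsing_inv_mul Q₁ (isUnit_iff_ne_zero.mpr hQ₁.det_pos.ne')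
    have h2 : Q₂ * Q₂⁻¹ = 1 := mul_nonsing_inv Q₂ (isUnit_iff_ne_zero.mpr hQ₂.det_pos.ne')
    rw [hD, Matrix.mul_sub, Matrix.sub_mul, h1, one_mul, mul_assoc, h2, mul_one]
  rw [hinner, hid]
  set c := Lam⁻¹ with hc
  have hDYD : (D * Q₂⁻¹ * D).PosSemidef := by
    have := hY.posSemidef.mul_mul_conjTranspose_same D
    rwa [hDH] at this
  have hDD : (D * D).PosSemidef := by
    have := posSemidef_conjTranspose_mul_self D
    rwa [hDH] at this
  have t1 : 0 ≤ ((Q₁⁻¹ - c • 1) * (D * Q₂⁻¹ * D)).trace :=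
    trace_mul_psd_nonneg (inv_sub_smul_psd hQ₁ hLam h₁) hDYD
  have t2 : 0 ≤ ((Q₂⁻¹ - c • 1) * (D * D)).trace :=
    trace_mul_psd_nonneg (inv_sub_smul_psd hQ₂ hLam h₂) hDD
  have e1 : (Q₁⁻¹ * D * Q₂⁻¹ * D).trace
      = ((Q₁⁻¹ - c • 1) * (D * Q₂⁻¹ * D)).trace + c * (D * Q₂⁻¹ * D).trace := by
    rw [Matrix.sub_mul (Q₁⁻¹) (c • 1) (D * Q₂⁻¹ * D), trace_sub, Matrix.smul_mul, one_mul, trace_smul, smul_eq_mul]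
    have : Q₁⁻¹ * D * Q₂⁻¹ * D = Q₁⁻¹ * (D * Q₂⁻¹ * D) := by
      simp only [mul_assoc]
    rw [this]; ring
  have e2 : (D * Q₂⁻¹ * D).trace = ((Q₂⁻¹ - c • 1) * (D * D)).trace + c * (D * D).trace := by
    have hcyc : (D * Q₂⁻¹ * D).trace = (Q₂⁻¹ * (D * D)).trace := by
      rw [trace_mul_cycle, ← mul_assoc, trace_mul_comm, mul_assoc]
    rw [hcyc, Matrix.sub_mul (Q₂⁻¹) (c • 1) (D * D), trace_sub, Matrix.smul_mul, one_mul, trace_smul, smul_eq_mul]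
    ring
  have e3 : (D * D).trace = frobNorm D ^ 2 := by
    have hnn : 0 ≤ ∑ i, ∑ j, (D i j) ^ 2 := by positivity
    rw [frobNorm, Real.sq_sqrt hnn]
    calc (D * D).trace = ∑ i, ∑ j, D i j * D j i := by
          simp [trace, Matrix.mul_apply, Matrix.diag]
      _ = ∑ i, ∑ j, (D i j) ^ 2 := by
          refine Finset.sum_congr rfl fun i _ => Finset.sum_congr rfl fun j _ => ?_
          rw [hsymm i j, sq]
  rw [e1, e2, e3]
  have hN : 0 ≤ frobNorm D ^ 2 := sq_nonneg _
  have hcL : c * Lam = 1 := inv_mul_cancel₀ hLam.ne'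
  have hcpos : 0 < c := by rw [hc]; positivity
  rw [div_le_iff₀ (by positivity : (0:ℝ) < Lam ^ 2)]
  nlinarith [mul_nonneg t1 (sq_nonneg Lam), mul_nonneg (mul_nonneg t2 hLam.le) hcpos.le,
    mul_nonneg t2 hLam.le, sq_nonneg (c * Lam - 1)]
end

section
/- Exact block update: Let S, Q be d×d symmetric positive definite matrices, I ⊆ {1,…,d} of size m, and R = Q⁻¹. Define Q̃ to agree with Q outside the I×I block, while Q̃_{I,I} = Q_{I,I} + (S_{I,I})⁻¹ − (R_{I,I})⁻¹. Then Q̃ is symmetric positive definite and minimises f_S over the affine set of symmetric positive definite matrices agreeing with Q outside the I×I block, where f_S(Q) = tr(SQ) − log det Q. -/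
open Matrix

/-- The `s × t` block of a matrix. -/
def blk {d : ℕ} (A : Matrix (Fin d) (Fin d) ℝ) (s t : Finset (Fin d)) :
    Matrix ↥s ↥t ℝ :=
  Matrix.of fun i j => A i.1 j.1

/-- The exact block update of `Q`: it agrees with `Q` outside the `I × I` block,
and `Q̃_{I,I} = Q_{I,I} + (S_{I,I})⁻¹ − (R_{I,I})⁻¹` with `R = Q⁻¹`. -/
noncomputable def blockUpdate {d : ℕ} (S Q : Matrix (Fin d) (Fin d) ℝ)
    (s : Finset (Fin d)) : Matrix (Fin d) (Fin d) ℝ :=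
  Matrix.of fun i j =>
    if hi : i ∈ s then
      if hj : j ∈ s then
        Q i j + ((blk S s s)⁻¹ - (blk Q⁻¹ s s)⁻¹) ⟨i, hi⟩ ⟨j, hj⟩
      else Q i j
    else Q i j

set_option linter.unusedSectionVars false

namespace StmtAux

section General

variable {m n : Type*} [Fintype m] [Fintype n] [DecidableEq m] [DecidableEq n]

lemma posDef_of_psd {M : Matrix n n ℝ} (h : M.PosSemidef) (hd : M.det ≠ 0) :
    M.PosDef := by
  refine PosDef.of_dotProduct_mulVec_pos h.1 fun x hx => ?_
  rcases (h.dotProduct_mulVec_nonneg x).lt_or_eq with hlt | heq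
  · exact hlt
  · exact absurd (Matrix.mulVec_injective_iff_isUnit.2
      ((Matrix.isUnit_iff_isUnit_det M).2 (isUnit_iff_ne_zero.2 hd))
      (by simpa using (h.dotProduct_mulVec_zero_iff x).mp heq.symm)) hx

lemma trace_eq_sum_eigenvalues {A : Matrix n n ℝ} (hA : A.IsHermitian) :
    A.trace = ∑ i, hA.eigenvalues i := by
  simpa using hA.trace_eq_sum_eigenvalues

lemma trace_fromBlocks' (A : Matrix m m ℝ) (B : Matrix m n ℝ) (C : Matrix n m ℝ)
    (D : Matrix n n ℝ) : (fromBlocks A B C D).trace = A.trace + D.trace := by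
  simp [Matrix.trace, Matrix.diag, Fintype.sum_sum_type, fromBlocks]

lemma posDef_toBlocks₂₂' {A : Matrix m m ℝ} {B : Matrix m n ℝ} {C : Matrix n m ℝ}
    {D : Matrix n n ℝ} (h : (fromBlocks A B C D).PosDef) : D.PosDef := by
  refine PosDef.of_dotProduct_mulVec_pos (isHermitian_fromBlocks_iff.1 h.1).2.2.2 fun y hy => ?_
  have h2 := h.dotProduct_mulVec_pos (x := Sum.elim 0 y) (fun hc => hy (funext fun j => congrFun hc (Sum.inr j)))
  simpa [fromBlocks_mulVec, dotProduct, Fintype.sum_sum_type] using h2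

lemma posDef_toBlocks₁₁' {A : Matrix m m ℝ} {B : Matrix m n ℝ} {C : Matrix n m ℝ}
    {D : Matrix n n ℝ} (h : (fromBlocks A B C D).PosDef) : A.PosDef := by
  refine PosDef.of_dotProduct_mulVec_pos (isHermitian_fromBlocks_iff.1 h.1).1 fun y hy => ?_
  have h2 := h.dotProduct_mulVec_pos (x := Sum.elim y 0) (fun hc => hy (funext fun j => congrFun hc (Sum.inl j)))
  simpa [fromBlocks_mulVec, dotProduct, Fintype.sum_sum_type] using h2

lemma posDef_fromBlocks₂₂' {A : Matrix m m ℝ} (B : Matrix m n ℝ) {D : Matrix n n ℝ}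
    (hD : D.PosDef) [Invertible D] :
    (fromBlocks A B Bᴴ D).PosDef ↔ (A - B * D⁻¹ * Bᴴ).PosDef := by
  constructor
  · intro h
    refine posDef_of_psd ((PosDef.fromBlocks₂₂ A B hD).1 h.posSemidef) ?_
    have hdet := det_fromBlocks₂₂ A B Bᴴ D
    rw [invOf_eq_nonsing_inv] at hdet
    have hne : (fromBlocks A B Bᴴ D).det ≠ 0 := h.det_pos.ne'
    rw [hdet] at hne
    exact fun hc => hne (by rw [hc, mul_zero])
  · intro h
    refine posDef_of_psd ((PosDef.fromBlocks₂₂ A B hD).2 h.posSemidef) ?_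
    rw [det_fromBlocks₂₂, invOf_eq_nonsing_inv]
    exact mul_ne_zero hD.det_pos.ne' h.det_pos.ne'

open scoped MatrixOrder in
lemma key_ineq {A M : Matrix n n ℝ} (hA : A.PosDef) (hM : M.PosDef) :
    (Fintype.card n : ℝ) + Real.log A.det ≤ (A * M).trace - Real.log M.det := by
  set q := CFC.sqrt A with hqdef
  have hqq : q * q = A := CFC.sqrt_mul_sqrt_self A hA.posSemidef.nonneg
  have hqh : q.IsHermitian := (CFC.sqrt_nonneg A).posSemidef.1
  have hdetA : 0 < A.det := hA.det_pos
  have hdetq : q.det ≠ 0 := by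
    intro h
    rw [← hqq, det_mul, h, mul_zero] at hdetA
    exact lt_irrefl _ hdetA
  set X := q * M * q with hXdef
  have hXh : X.IsHermitian := by
    have := Matrix.isHermitian_conjTranspose_mul_mul q hM.1
    rwa [hqh.eq] at this
  have hXpd : X.PosDef := by
    refine PosDef.of_dotProduct_mulVec_pos hXh fun x hx => ?_
    have hu : IsUnit q := (Matrix.isUnit_iff_isUnit_det q).2 (isUnit_iff_ne_zero.2 hdetq)
    have hx' : q *ᵥ x ≠ 0 := fun h =>
      hx (Matrix.mulVec_injective_iff_isUnit.2 hu (by simpa using h))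
    have hpos := hM.dotProduct_mulVec_pos hx'
    have e1 : star x ⬝ᵥ X *ᵥ x = star (q *ᵥ x) ⬝ᵥ M *ᵥ (q *ᵥ x) := by
      rw [star_mulVec, hqh.eq, hXdef, ← mulVec_mulVec, ← mulVec_mulVec, dotProduct_mulVec]
    rw [e1]; exact hpos
  have hμpos : ∀ i, 0 < hXh.eigenvalues i := hXpd.eigenvalues_pos
  have htr : X.trace = ∑ i, hXh.eigenvalues i := trace_eq_sum_eigenvalues hXh
  have hdet : X.det = ∏ i, hXh.eigenvalues i := by simpa using hXh.det_eq_prod_eigenvalues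
  have htrAM : X.trace = (A * M).trace := by
    rw [hXdef, trace_mul_comm, ← Matrix.mul_assoc, hqq]
  have hdetX : X.det = A.det * M.det := by
    rw [hXdef, det_mul, det_mul, ← hqq, det_mul]; ring
  have hlogX : Real.log X.det = Real.log A.det + Real.log M.det := by
    rw [hdetX, Real.log_mul hdetA.ne' hM.det_pos.ne']
  have hlogprod : Real.log X.det = ∑ i, Real.log (hXh.eigenvalues i) := by
    rw [hdet]; exact Real.log_prod (fun i _ => (hμpos i).ne')
  have hsum : (Fintype.card n : ℝ) ≤ ∑ i, (hXh.eigenvalues i - Real.log (hXh.eigenvalues i)) := by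
    have hb : ∀ i ∈ Finset.univ, (1 : ℝ) ≤ hXh.eigenvalues i - Real.log (hXh.eigenvalues i) := by
      intro i _
      have := Real.log_le_sub_one_of_pos (hμpos i)
      linarith
    calc (Fintype.card n : ℝ) = ∑ _i : n, (1 : ℝ) := by simp
      _ ≤ _ := Finset.sum_le_sum hb
  have hsplit : ∑ i, (hXh.eigenvalues i - Real.log (hXh.eigenvalues i))
      = X.trace - Real.log X.det := by
    rw [htr, hlogprod, Finset.sum_sub_distrib]
  rw [hsplit, htrAM, hlogX] at hsum
  linarith

lemma loss_at_inv {A : Matrix n n ℝ} (hA : A.PosDef) :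
    (A * A⁻¹).trace - Real.log (A⁻¹).det
      = (Fintype.card n : ℝ) + Real.log A.det := by
  rw [Matrix.mul_nonsing_inv _ (isUnit_iff_ne_zero.2 hA.det_pos.ne'), trace_one,
    Matrix.det_nonsing_inv, Ring.inverse_eq_inv', Real.log_inv]
  ring

end General

section Transport

variable {d : ℕ} (s : Finset (Fin d))

/-- equivalence between `↥s ⊕ ↥sᶜ` and `Fin d`. -/
def em : ({x : Fin d // x ∈ s} ⊕ {x : Fin d // x ∉ s}) ≃ Fin d :=
  Equiv.sumCompl _

/-- transport a matrix to block form. -/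
def toB (A : Matrix (Fin d) (Fin d) ℝ) :
    Matrix ({x : Fin d // x ∈ s} ⊕ {x : Fin d // x ∉ s})
      ({x : Fin d // x ∈ s} ⊕ {x : Fin d // x ∉ s}) ℝ :=
  A.submatrix (em s) (em s)

def ur (A : Matrix (Fin d) (Fin d) ℝ) : Matrix {x : Fin d // x ∈ s} {x : Fin d // x ∉ s} ℝ :=
  Matrix.of fun i j => A i.1 j.1

def ll (A : Matrix (Fin d) (Fin d) ℝ) : Matrix {x : Fin d // x ∉ s} {x : Fin d // x ∈ s} ℝ :=
  Matrix.of fun i j => A i.1 j.1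

def lr (A : Matrix (Fin d) (Fin d) ℝ) : Matrix {x : Fin d // x ∉ s} {x : Fin d // x ∉ s} ℝ :=
  Matrix.of fun i j => A i.1 j.1

lemma toB_eq (A : Matrix (Fin d) (Fin d) ℝ) :
    toB s A = fromBlocks (blk A s s) (ur s A) (ll s A) (lr s A) := by
  ext i j
  cases i <;> cases j <;> rfl

lemma toB_mul (A B : Matrix (Fin d) (Fin d) ℝ) : toB s (A * B) = toB s A * toB s B :=
  (submatrix_mul_equiv A B _ _ _).symm

lemma toB_trace (A : Matrix (Fin d) (Fin d) ℝ) : (toB s A).trace = A.trace := by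
  simp only [toB, Matrix.trace, Matrix.diag, submatrix_apply]
  exact Equiv.sum_comp (em s) (fun j => A j j)

lemma toB_det (A : Matrix (Fin d) (Fin d) ℝ) : (toB s A).det = A.det :=
  det_submatrix_equiv_self _ _

lemma toB_sub (A B : Matrix (Fin d) (Fin d) ℝ) : toB s (A - B) = toB s A - toB s B := rfl

lemma toB_posDef {A : Matrix (Fin d) (Fin d) ℝ} (h : A.PosDef) : (toB s A).PosDef :=
  posDef_of_psd ((posSemidef_submatrix_equiv (em s)).2 h.posSemidef)
    (by rw [toB_det]; exact h.det_pos.ne')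

lemma of_toB_posDef {A : Matrix (Fin d) (Fin d) ℝ} (h : (toB s A).PosDef) : A.PosDef := by
  have h2 : A = (toB s A).submatrix (em s).symm (em s).symm := by
    ext i j; simp [toB]
  rw [h2]
  exact posDef_of_psd ((posSemidef_submatrix_equiv (em s).symm).2 h.posSemidef)
    (by rw [det_submatrix_equiv_self]; exact h.det_pos.ne')

lemma toB_inv {A : Matrix (Fin d) (Fin d) ℝ} (h : IsUnit A.det) :
    toB s (A⁻¹) = (toB s A)⁻¹ := by
  have h1 : toB s A * toB s (A⁻¹) = 1 := by
    rw [← toB_mul, Matrix.mul_nonsing_inv _ h]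
    exact submatrix_one_equiv _
  exact (Matrix.inv_eq_right_inv h1).symm

lemma blk_eq_toBlocks₁₁ (A : Matrix (Fin d) (Fin d) ℝ) :
    blk A s s = toBlocks₁₁ (toB s A) := rfl

end Transport

end StmtAux

open StmtAux in
/-- Exact block update: for `S, Q` symmetric positive definite and an index set
`I`, the updated matrix `Q̃` is symmetric positive definite and minimises `f_S`
over all symmetric positive definite matrices agreeing with `Q` outside the
`I × I` block. -/
theorem stmt_12 {d : ℕ} (S Q : Matrix (Fin d) (Fin d) ℝ)
    (hS : S.PosDef) (hQ : Q.PosDef) (s : Finset (Fin d)) :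
    (blockUpdate S Q s).PosDef ∧
      ∀ Q' : Matrix (Fin d) (Fin d) ℝ, Q'.PosDef →
        (∀ i j, (i ∉ s ∨ j ∉ s) → Q' i j = Q i j) →
        gaussLoss S (blockUpdate S Q s) ≤ gaussLoss S Q' := by
  classical
  have hQsymm : ∀ a b, Q a b = Q b a := fun a b => by
    have := congrFun (congrFun hQ.1 a) b
    simpa [Matrix.conjTranspose_apply] using this.symm
  set A := blk Q s s with hAdef
  set B := ur s Q with hBdef
  set D := lr s Q with hDdef
  have hllQ : ll s Q = Bᴴ := by
    ext i j
    simp only [ll, of_apply, conjTranspose_apply, hBdef, ur, star_trivial]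
    exact hQsymm i.1 j.1
  have htoBQ : toB s Q = fromBlocks A B Bᴴ D := by
    rw [toB_eq, hllQ]
  have htoBQpd : (toB s Q).PosDef := toB_posDef s hQ
  have hfbQpd : (fromBlocks A B Bᴴ D).PosDef := htoBQ ▸ htoBQpd
  have hDpd : D.PosDef := posDef_toBlocks₂₂' hfbQpd
  haveI : Invertible D := D.invertibleOfIsUnitDet (isUnit_iff_ne_zero.2 hDpd.det_pos.ne')
  set T := A - B * D⁻¹ * Bᴴ with hTdef
  have hTpd : T.PosDef := (posDef_fromBlocks₂₂' B hDpd).1 hfbQpd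
  -- the (I,I) block of the inverse
  haveI instFB : Invertible (fromBlocks A B Bᴴ D) :=
    (fromBlocks A B Bᴴ D).invertibleOfIsUnitDet (isUnit_iff_ne_zero.2 hfbQpd.det_pos.ne')
  haveI instT : Invertible T := T.invertibleOfIsUnitDet (isUnit_iff_ne_zero.2 hTpd.det_pos.ne')
  haveI instT' : Invertible (A - B * ⅟D * Bᴴ) := by
    rw [invOf_eq_nonsing_inv]; exact instT
  have hfbinv : (fromBlocks A B Bᴴ D)⁻¹ =
      fromBlocks (T⁻¹) (-(T⁻¹ * B * D⁻¹)) (-(D⁻¹ * Bᴴ * T⁻¹))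
        (D⁻¹ + D⁻¹ * Bᴴ * T⁻¹ * B * D⁻¹) := by
    rw [← invOf_eq_nonsing_inv, invOf_fromBlocks₂₂_eq]
    simp only [invOf_eq_nonsing_inv]
    rfl
  have hR : blk Q⁻¹ s s = T⁻¹ := by
    have h1 : toB s (Q⁻¹) = (fromBlocks A B Bᴴ D)⁻¹ := by
      rw [toB_inv s (isUnit_iff_ne_zero.2 hQ.det_pos.ne'), htoBQ]
    rw [blk_eq_toBlocks₁₁, h1, hfbinv, toBlocks_fromBlocks₁₁]
  have hRinv : (blk Q⁻¹ s s)⁻¹ = T := by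
    rw [hR, Matrix.nonsing_inv_nonsing_inv _ (isUnit_iff_ne_zero.2 hTpd.det_pos.ne')]
  set W := blk S s s with hWdef
  have hWpd : W.PosDef := by
    have := toB_posDef s hS
    rw [toB_eq] at this
    exact posDef_toBlocks₁₁' this
  -- blocks of the update
  have hupd_toB : toB s (blockUpdate S Q s) = fromBlocks (A + (W⁻¹ - T)) B Bᴴ D := by
    apply Matrix.ext
    rintro (i | i) (j | j)
    · show blockUpdate S Q s i.1 j.1 = (A + (W⁻¹ - T)) i j
      simp only [blockUpdate, of_apply, dif_pos i.2, dif_pos j.2, hRinv]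
      rfl
    · show blockUpdate S Q s i.1 j.1 = B i j
      simp only [blockUpdate, of_apply, dif_pos i.2, dif_neg j.2]
      rfl
    · show blockUpdate S Q s i.1 j.1 = Bᴴ i j
      simp only [blockUpdate, of_apply, dif_neg i.2]
      simpa [hBdef, ur, conjTranspose_apply] using hQsymm i.1 j.1
    · show blockUpdate S Q s i.1 j.1 = D i j
      simp only [blockUpdate, of_apply, dif_neg i.2]
      rfl
  have hupd_schur : A + (W⁻¹ - T) - B * D⁻¹ * Bᴴ = W⁻¹ := by
    rw [hTdef]; abel
  have hupd_pd : (blockUpdate S Q s).PosDef := by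
    apply of_toB_posDef s
    rw [hupd_toB]
    apply (posDef_fromBlocks₂₂' B hDpd).2
    rw [hupd_schur]
    exact hWpd.inv
  have hupd_feas : ∀ i j, (i ∉ s ∨ j ∉ s) → blockUpdate S Q s i j = Q i j := by
    intro i j h
    rcases h with h | h
    · simp [blockUpdate, h]
    · by_cases hi : i ∈ s <;> simp [blockUpdate, h, hi]
  -- the loss decomposition for any feasible matrix
  set K := B * D⁻¹ * Bᴴ with hKdef
  have key_form : ∀ Q'' : Matrix (Fin d) (Fin d) ℝ, Q''.PosDef →
      (∀ i j, (i ∉ s ∨ j ∉ s) → Q'' i j = Q i j) →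
      (blk Q'' s s - K).PosDef ∧
        gaussLoss S Q'' =
          ((S * Q).trace - (W * A).trace + (W * K).trace - Real.log D.det)
            + ((W * (blk Q'' s s - K)).trace - Real.log (blk Q'' s s - K).det) := by
    intro Q'' hpd hfeas
    set U := blk Q'' s s with hUdef
    have hblocks : toB s Q'' = fromBlocks U B Bᴴ D := by
      apply Matrix.ext
      rintro (i | i) (j | j)
      · rfl
      · show Q'' i.1 j.1 = B i j
        exact hfeas i.1 j.1 (Or.inr j.2)
      · show Q'' i.1 j.1 = Bᴴ i j
        rw [hfeas i.1 j.1 (Or.inl i.2)]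
        simpa [hBdef, ur, conjTranspose_apply] using hQsymm i.1 j.1
      · show Q'' i.1 j.1 = D i j
        exact hfeas i.1 j.1 (Or.inl i.2)
    have hfbpd : (fromBlocks U B Bᴴ D).PosDef := hblocks ▸ toB_posDef s hpd
    have hMpd : (U - K).PosDef := by
      rw [hKdef]
      exact (posDef_fromBlocks₂₂' B hDpd).1 hfbpd
    refine ⟨hMpd, ?_⟩
    -- trace part
    have hdiff : toB s Q'' - toB s Q = fromBlocks (U - A) 0 0 0 := by
      rw [hblocks, htoBQ]
      ext i j
      cases i <;> cases j <;> simp [fromBlocks]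
    have htrdiff : (S * (Q'' - Q)).trace = (W * U).trace - (W * A).trace := by
      have h1 : (S * (Q'' - Q)).trace = (toB s (S * (Q'' - Q))).trace := (toB_trace s _).symm
      rw [h1, toB_mul, toB_sub, hdiff, toB_eq]
      rw [fromBlocks_multiply, trace_fromBlocks']
      simp [Matrix.mul_sub, trace_sub]
      rfl
    have htr : (S * Q'').trace = (S * Q).trace + ((W * U).trace - (W * A).trace) := by
      rw [← htrdiff, Matrix.mul_sub, trace_sub]; ring
    -- det part
    have hdet : Q''.det = D.det * (U - K).det := by
      rw [← toB_det s, hblocks, det_fromBlocks₂₂, invOf_eq_nonsing_inv, hKdef]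
    have hlog : Real.log Q''.det = Real.log D.det + Real.log (U - K).det := by
      rw [hdet, Real.log_mul hDpd.det_pos.ne' hMpd.det_pos.ne']
    have htrW : (W * U).trace = (W * (U - K)).trace + (W * K).trace := by
      rw [Matrix.mul_sub, trace_sub]; ring
    unfold gaussLoss
    rw [htr, hlog, htrW]
    ring
  refine ⟨hupd_pd, ?_⟩
  intro Q' hpd' hfeas'
  obtain ⟨hM'pd, hval'⟩ := key_form Q' hpd' hfeas'
  obtain ⟨hMupd, hvalupd⟩ := key_form (blockUpdate S Q s) hupd_pd hupd_feas
  have hblkupd : blk (blockUpdate S Q s) s s = A + (W⁻¹ - T) := by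
    rw [blk_eq_toBlocks₁₁, hupd_toB, toBlocks_fromBlocks₁₁]
  have hMupd_eq : blk (blockUpdate S Q s) s s - K = W⁻¹ := by
    rw [hblkupd, hKdef, hTdef]; abel
  rw [hval', hvalupd, hMupd_eq]
  have h1 := loss_at_inv hWpd
  have h2 := key_ineq hWpd hM'pd
  linarith
end

section
/- In the setting of the exact block update, the inverse R̃ = Q̃⁻¹ of the updated matrix satisfies R̃_{I,I} = S_{I,I}, R̃_{I,Iᶜ} = S_{I,I}(R_{I,I})⁻¹ R_{I,Iᶜ}, and R̃_{Iᶜ,Iᶜ} = R_{Iᶜ,Iᶜ} − R_{Iᶜ,I}(R_{I,I})⁻¹[I_m − S_{I,I}(R_{I,I})⁻¹] R_{I,Iᶜ}. -/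
open Matrix

/-- The 0/1 matrix embedding the coordinates of `t` into `Fin d`. -/
def emb {d : ℕ} (t : Finset (Fin d)) : Matrix (Fin d) ↥t ℝ :=
  Matrix.of fun i j => if i = j.1 then 1 else 0

lemma emb_blk {d : ℕ} (A : Matrix (Fin d) (Fin d) ℝ) (a b : Finset (Fin d)) :
    (emb a)ᵀ * A * emb b = blk A a b := by
  ext i j
  simp [emb, blk, Matrix.mul_apply, transpose_apply]

lemma emb_mid {d : ℕ} (s : Finset (Fin d)) (M : Matrix ↥s ↥s ℝ) (i j : Fin d) :
    (emb s * M * (emb s)ᵀ) i j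
      = if hi : i ∈ s then (if hj : j ∈ s then M ⟨i, hi⟩ ⟨j, hj⟩ else 0) else 0 := by
  simp only [Matrix.mul_apply, emb, transpose_apply, Matrix.of_apply]
  by_cases hi : i ∈ s
  · by_cases hj : j ∈ s
    · rw [dif_pos hi, dif_pos hj]
      rw [Fintype.sum_eq_single (⟨j, hj⟩ : ↥s)]
      · rw [if_pos rfl, mul_one]
        rw [Fintype.sum_eq_single (⟨i, hi⟩ : ↥s)]
        · simp
        · intro k hk
          rw [if_neg, zero_mul]
          intro h; exact hk (Subtype.ext h.symm)
      · intro k hk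
        rw [if_neg, mul_zero]
        intro h; exact hk (Subtype.ext h.symm)
    · rw [dif_pos hi, dif_neg hj]
      apply Finset.sum_eq_zero
      intro l _
      rw [if_neg, mul_zero]
      intro h; exact hj (h ▸ l.2)
  · rw [dif_neg hi]
    apply Finset.sum_eq_zero
    intro l _
    apply mul_eq_zero_of_left
    apply Finset.sum_eq_zero
    intro k _
    rw [if_neg, zero_mul]
    intro h; exact hi (h ▸ k.2)

lemma sum_restrict {d : ℕ} (s : Finset (Fin d)) (f : Fin d → ℝ)
    (hf : ∀ i ∉ s, f i = 0) : ∑ i : Fin d, f i = ∑ i : ↥s, f i.1 := by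
  rw [Finset.sum_coe_sort s f]
  exact (Finset.sum_subset (Finset.subset_univ s) (fun x _ hx => hf x hx)).symm

lemma blk_posDef {d : ℕ} {M : Matrix (Fin d) (Fin d) ℝ} (hM : M.PosDef)
    (s : Finset (Fin d)) : (blk M s s).PosDef := by
  refine Matrix.posDef_iff_dotProduct_mulVec.mpr ⟨?_, ?_⟩
  · ext i j
    have := congrFun (congrFun hM.1 i.1) j.1
    simpa [blk, Matrix.conjTranspose_apply] using this
  · intro x hx
    set y : Fin d → ℝ := fun i => if h : i ∈ s then x ⟨i, h⟩ else 0 with hy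
    have hyne : y ≠ 0 := by
      intro h
      apply hx
      ext i
      have := congrFun h i.1
      simpa [hy, i.2] using this
    have hpos := (Matrix.posDef_iff_dotProduct_mulVec.mp hM).2 hyne
    convert hpos using 1
    simp only [dotProduct, Matrix.mulVec, dotProduct, blk, Matrix.of_apply,
      star, Pi.star_apply, star_trivial, id]
    rw [sum_restrict s (fun i => y i * ∑ j, M i j * y j)
      (fun i hi => by simp [hy, hi])]
    apply Finset.sum_congr rfl
    intro i _
    have hyi : y i.1 = x i := by simp [hy, i.2]
    rw [hyi]
    congr 1
    rw [sum_restrict s (fun j => M i.1 j * y j) (fun j hj => by simp [hy, hj])]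
    apply Finset.sum_congr rfl
    intro j _
    simp [hy, j.2]

/-- Blocks of the inverse of the exact block update: with `R = Q⁻¹` and
`R̃ = Q̃⁻¹`, one has `R̃_{I,I} = S_{I,I}`,
`R̃_{I,Iᶜ} = S_{I,I} (R_{I,I})⁻¹ R_{I,Iᶜ}`, and
`R̃_{Iᶜ,Iᶜ} = R_{Iᶜ,Iᶜ} − R_{Iᶜ,I}(R_{I,I})⁻¹[I − S_{I,I}(R_{I,I})⁻¹]R_{I,Iᶜ}`. -/
theorem stmt_13 {d : ℕ} (S Q : Matrix (Fin d) (Fin d) ℝ)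
    (hS : S.PosDef) (hQ : Q.PosDef) (s : Finset (Fin d)) :
    blk (blockUpdate S Q s)⁻¹ s s = blk S s s ∧
      blk (blockUpdate S Q s)⁻¹ s sᶜ
        = blk S s s * (blk Q⁻¹ s s)⁻¹ * blk Q⁻¹ s sᶜ ∧
      blk (blockUpdate S Q s)⁻¹ sᶜ sᶜ
        = blk Q⁻¹ sᶜ sᶜ - blk Q⁻¹ sᶜ s * (blk Q⁻¹ s s)⁻¹ *
            (1 - blk S s s * (blk Q⁻¹ s s)⁻¹) * blk Q⁻¹ s sᶜ := by
  set A := blk Q⁻¹ s s with hAdef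
  set Ss := blk S s s with hSsdef
  set E := emb s with hEdef
  have hAp : A.PosDef := blk_posDef hQ.inv s
  have hSp : Ss.PosDef := blk_posDef hS s
  have hAd : IsUnit A.det := (Matrix.isUnit_iff_isUnit_det A).mp hAp.isUnit
  have hSd : IsUnit Ss.det := (Matrix.isUnit_iff_isUnit_det Ss).mp hSp.isUnit
  have hQd : IsUnit Q.det := (Matrix.isUnit_iff_isUnit_det Q).mp hQ.isUnit
  have hA1 : A * A⁻¹ = 1 := Matrix.mul_nonsing_inv A hAd
  have hA2 : A⁻¹ * A = 1 := Matrix.nonsing_inv_mul A hAd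
  have hS2 : Ss⁻¹ * Ss = 1 := Matrix.nonsing_inv_mul Ss hSd
  have hQ1 : Q * Q⁻¹ = 1 := Matrix.mul_nonsing_inv Q hQd
  -- cancellation lemmas in right-associated form
  have hQc : ∀ X : Matrix (Fin d) (Fin d) ℝ, Q * (Q⁻¹ * X) = X := fun X => by
    rw [← Matrix.mul_assoc, hQ1, Matrix.one_mul]
  have hAc : ∀ {n : Type} (X : Matrix ↥s n ℝ), A * (A⁻¹ * X) = X := fun X => by
    rw [← Matrix.mul_assoc, hA1, Matrix.one_mul]
  have hAc' : ∀ {n : Type} (X : Matrix ↥s n ℝ), A⁻¹ * (A * X) = X := fun X => by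
    rw [← Matrix.mul_assoc, hA2, Matrix.one_mul]
  have hSc' : ∀ {n : Type} (X : Matrix ↥s n ℝ), Ss⁻¹ * (Ss * X) = X := fun X => by
    rw [← Matrix.mul_assoc, hS2, Matrix.one_mul]
  have hEQE : ∀ X : Matrix ↥s (Fin d) ℝ, Eᵀ * (Q⁻¹ * (E * X)) = A * X := fun X => by
    rw [← Matrix.mul_assoc, ← Matrix.mul_assoc, hEdef, emb_blk, hAdef]
  set D : Matrix ↥s ↥s ℝ := Ss⁻¹ - A⁻¹ with hDdef
  set K : Matrix ↥s ↥s ℝ := A⁻¹ - A⁻¹ * Ss * A⁻¹ with hKdef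
  have hupd : blockUpdate S Q s = Q + E * D * Eᵀ := by
    ext i j
    rw [Matrix.add_apply, hEdef, emb_mid]
    by_cases hi : i ∈ s
    · by_cases hj : j ∈ s
      · simp [blockUpdate, hi, hj, hDdef, hSsdef, hAdef, Matrix.sub_apply]
      · simp [blockUpdate, hi, hj]
    · simp [blockUpdate, hi]
  set Rt : Matrix (Fin d) (Fin d) ℝ := Q⁻¹ - Q⁻¹ * (E * (K * (Eᵀ * Q⁻¹))) with hRtdef
  have key : blockUpdate S Q s * Rt = 1 := by
    rw [hupd, hRtdef, hDdef, hKdef]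
    simp only [Matrix.mul_sub, Matrix.sub_mul, Matrix.mul_add, Matrix.add_mul,
      Matrix.mul_assoc, hQc, hAc, hAc', hSc', hEQE, hQ1, hA1, hA2, hS2,
      Matrix.mul_one, Matrix.one_mul]
    abel
  have hinv : (blockUpdate S Q s)⁻¹ = Rt := Matrix.inv_eq_right_inv key
  have hgen : ∀ (a : Finset (Fin d)) {n : Type} [Fintype n] (Z : Matrix ↥s n ℝ),
      (emb a)ᵀ * (Q⁻¹ * (E * Z)) = blk Q⁻¹ a s * Z := by
    intro a n _ Z
    rw [← Matrix.mul_assoc, ← Matrix.mul_assoc, hEdef, emb_blk]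
  have hblk : ∀ a b : Finset (Fin d),
      blk Rt a b = blk Q⁻¹ a b - blk Q⁻¹ a s * (K * blk Q⁻¹ s b) := by
    intro a b
    rw [← emb_blk Rt a b, hRtdef]
    rw [Matrix.mul_sub, Matrix.sub_mul]
    congr 1
    · exact emb_blk Q⁻¹ a b
    · rw [Matrix.mul_assoc, Matrix.mul_assoc, Matrix.mul_assoc]
      rw [show K * (Eᵀ * Q⁻¹) * emb b = K * (Eᵀ * (Q⁻¹ * emb b)) by
        rw [Matrix.mul_assoc, Matrix.mul_assoc]]
      rw [show Eᵀ * (Q⁻¹ * emb b) = blk Q⁻¹ s b by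
        rw [← Matrix.mul_assoc, hEdef, emb_blk]]
      exact hgen a (K * blk Q⁻¹ s b)
  refine ⟨?_, ?_, ?_⟩
  · rw [hinv, hblk s s, ← hAdef]
    simp only [hKdef, Matrix.mul_sub, Matrix.sub_mul, Matrix.mul_assoc,
      hAc, hAc', hSc', hA1, hA2, hS2, Matrix.mul_one, Matrix.one_mul]
    abel
  · rw [hinv, hblk s sᶜ, ← hAdef]
    simp only [hKdef, Matrix.mul_sub, Matrix.sub_mul, Matrix.mul_assoc,
      hAc, hAc', hSc', hA1, hA2, hS2, Matrix.mul_one, Matrix.one_mul]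
    abel
  · rw [hinv, hblk sᶜ sᶜ]
    simp only [hKdef, Matrix.mul_sub, Matrix.sub_mul, Matrix.mul_assoc,
      hAc, hAc', hSc', hA1, hA2, hS2, Matrix.mul_one, Matrix.one_mul]
end

section
/- In the setting of the exact block update, the decrease of the Gaussian graphical loss equals f_S(Q) − f_S(Q̃) = tr(S_{I,I}(R_{I,I})⁻¹) − m − log det(S_{I,I}(R_{I,I})⁻¹); in particular this quantity is nonnegative. -/
open Matrix

namespace Stmt14Aux

/-- Positive definiteness is inherited by principal submatrices along an injective map. -/
lemma posDef_submatrix {n m : Type*} [Fintype n] [Fintype m] {M : Matrix n n ℝ}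
    (hM : M.PosDef) {e : m → n} (he : Function.Injective e) :
    (M.submatrix e e).PosDef := by
  classical
  refine PosDef.of_dotProduct_mulVec_pos (by rw [IsHermitian, conjTranspose_submatrix, hM.1.eq]) fun x hx => ?_
  set y : n → ℝ := Function.extend e x 0 with hy
  have hye : ∀ i, y (e i) = x i := fun i => he.extend_apply x 0 i
  have hy0 : ∀ k, k ∉ Finset.univ.image e → y k = 0 := by
    intro k hk
    refine Function.extend_apply' x (0 : n → ℝ) k (fun h => hk ?_)
    obtain ⟨a, ha⟩ := h
    exact Finset.mem_image.mpr ⟨a, Finset.mem_univ a, ha⟩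
  have hyne : y ≠ 0 := by
    intro h
    apply hx
    funext i
    have h2 := hye i
    rw [h] at h2
    simpa using h2.symm
  have hMv : ∀ j : n, (M *ᵥ y) j = ∑ i : m, M j (e i) * x i := by
    intro j
    have h1 : (∑ i : m, M j (e i) * x i) = ∑ k ∈ Finset.univ.image e, M j k * y k := by
      rw [Finset.sum_image (fun a _ b _ h => he h)]
      exact Finset.sum_congr rfl fun i _ => by rw [hye]
    rw [mulVec, dotProduct, h1]
    exact (Finset.sum_subset (Finset.subset_univ _)
      (fun k _ hk => by rw [hy0 k hk, mul_zero])).symm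
  have key : dotProduct (star x) ((M.submatrix e e) *ᵥ x) = dotProduct (star y) (M *ᵥ y) := by
    simp only [star_trivial, dotProduct]
    have h1 : (∑ i : m, x i * ((M.submatrix e e) *ᵥ x) i)
        = ∑ k ∈ Finset.univ.image e, y k * (M *ᵥ y) k := by
      rw [Finset.sum_image (fun a _ b _ h => he h)]
      refine Finset.sum_congr rfl fun i _ => ?_
      rw [hye, hMv]
      simp [mulVec, dotProduct, submatrix_apply]
    rw [h1]
    exact Finset.sum_subset (Finset.subset_univ _)
      (fun k _ hk => by rw [hy0 k hk, zero_mul])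
  rw [key]
  exact hM.dotProduct_mulVec_pos hyne

/-- Congruence by an invertible matrix preserves positive definiteness. -/
lemma posDef_conj {n : Type*} [Fintype n] [DecidableEq n] {B C : Matrix n n ℝ}
    (hB : B.PosDef) (hC : IsUnit C.det) : (Cᴴ * B * C).PosDef := by
  refine PosDef.of_dotProduct_mulVec_pos (isHermitian_conjTranspose_mul_mul C hB.1) fun x hx => ?_
  have hCx : C *ᵥ x ≠ 0 := by
    intro h
    exact hx ((Matrix.mulVec_injective_iff_isUnit.mpr ((isUnit_iff_isUnit_det C).mpr hC)).eq_iff.mp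
      (by simpa using h))
  simpa only [star_mulVec, dotProduct_mulVec, vecMul_vecMul] using hB.dotProduct_mulVec_pos hCx

/-- For a positive definite real matrix, `tr M − n − log det M ≥ 0`. -/
lemma trace_sub_log_det_nonneg {n : Type*} [Fintype n] [DecidableEq n] {M : Matrix n n ℝ}
    (hM : M.PosDef) : 0 ≤ M.trace - (Fintype.card n : ℝ) - Real.log M.det := by
  have hlam : ∀ i, 0 < hM.1.eigenvalues i := hM.eigenvalues_pos
  have htr : M.trace = ∑ i, hM.1.eigenvalues i := by
    rw [hM.1.trace_eq_sum_eigenvalues]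
    simp
  have hdet : M.det = ∏ i, hM.1.eigenvalues i := by
    rw [hM.1.det_eq_prod_eigenvalues]; norm_num
  have hlog : Real.log M.det = ∑ i, Real.log (hM.1.eigenvalues i) := by
    rw [hdet, Real.log_prod]
    exact fun i _ => (hlam i).ne'
  rw [htr, hlog]
  have hcard : (Fintype.card n : ℝ) = ∑ _i : n, (1 : ℝ) := by simp
  rw [hcard, ← Finset.sum_sub_distrib, ← Finset.sum_sub_distrib]
  refine Finset.sum_nonneg fun i _ => ?_
  have := Real.log_le_sub_one_of_pos (hlam i)
  linarith

variable {d : ℕ} (s : Finset (Fin d))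

/-- The inclusion matrix of `s` into `Fin d`. -/
def J : Matrix ↥s (Fin d) ℝ :=
  Matrix.of fun i j => if (i : Fin d) = j then 1 else 0

lemma sum_subtype_ite {β : Type*} [AddCommMonoid β] (f : ↥s → β) (i : Fin d) :
    (∑ a : ↥s, if (a : Fin d) = i then f a else 0)
      = if hi : i ∈ s then f ⟨i, hi⟩ else 0 := by
  split_ifs with hi
  · rw [Fintype.sum_eq_single ⟨i, hi⟩ (fun a ha => if_neg fun h => ha (Subtype.ext h))]
    simp
  · refine Finset.sum_eq_zero fun a _ => if_neg fun h => hi (by rw [← h]; exact a.2)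

lemma blk_sandwich (M : Matrix (Fin d) (Fin d) ℝ) : J s * M * (J s)ᵀ = blk M s s := by
  ext a b
  simp [Matrix.mul_apply, J, blk, transpose_apply, ite_mul, mul_ite, one_mul, mul_one,
    zero_mul, mul_zero, Finset.sum_ite_eq, Finset.sum_ite_eq']

lemma sandwich_apply (Δ : Matrix ↥s ↥s ℝ) (i j : Fin d) :
    ((J s)ᵀ * Δ * J s) i j
      = if hi : i ∈ s then (if hj : j ∈ s then Δ ⟨i, hi⟩ ⟨j, hj⟩ else 0) else 0 := by
  rw [Matrix.mul_apply]
  simp only [Matrix.mul_apply, transpose_apply, J, Matrix.of_apply, ite_mul, one_mul,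
    zero_mul, mul_ite, mul_one, mul_zero]
  simp only [sum_subtype_ite]
  split_ifs <;> rfl

end Stmt14Aux

/-- The decrease of the Gaussian graphical loss in an exact block update equals
`tr(S_{I,I}(R_{I,I})⁻¹) − m − log det(S_{I,I}(R_{I,I})⁻¹)` with `R = Q⁻¹` and
`m = |I|`; in particular it is nonnegative. -/
theorem stmt_14 {d : ℕ} (S Q : Matrix (Fin d) (Fin d) ℝ)
    (hS : S.PosDef) (hQ : Q.PosDef) (s : Finset (Fin d)) :
    gaussLoss S Q - gaussLoss S (blockUpdate S Q s)
        = (blk S s s * (blk Q⁻¹ s s)⁻¹).trace - (s.card : ℝ)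
            - Real.log (blk S s s * (blk Q⁻¹ s s)⁻¹).det ∧
      0 ≤ gaussLoss S Q - gaussLoss S (blockUpdate S Q s) := by
  classical
  set Am := blk Q⁻¹ s s with hAmdef
  set Bm := blk S s s with hBmdef
  set Δ := Bm⁻¹ - Am⁻¹ with hΔdef
  have hAm : Am.PosDef := Stmt14Aux.posDef_submatrix hQ.inv Subtype.val_injective
  have hBm : Bm.PosDef := Stmt14Aux.posDef_submatrix hS Subtype.val_injective
  have hAd : Am.det ≠ 0 := hAm.det_pos.ne'
  have hBd : Bm.det ≠ 0 := hBm.det_pos.ne'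
  have hQd : IsUnit Q.det := hQ.det_pos.ne'.isUnit
  set Jm := Stmt14Aux.J s with hJm
  have hblkA : Jm * Q⁻¹ * Jmᵀ = Am := Stmt14Aux.blk_sandwich s Q⁻¹
  have hblkB : Jm * S * Jmᵀ = Bm := Stmt14Aux.blk_sandwich s S
  have hBU : blockUpdate S Q s = Q + Jmᵀ * Δ * Jm := by
    ext i j
    rw [Matrix.add_apply, Stmt14Aux.sandwich_apply]
    simp only [blockUpdate, Matrix.of_apply]
    split_ifs <;> simp [hΔdef, Matrix.sub_apply, hAmdef, hBmdef]
  have htr : (S * blockUpdate S Q s).trace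
      = (S * Q).trace + (s.card : ℝ) - (Bm * Am⁻¹).trace := by
    rw [hBU, Matrix.mul_add, trace_add]
    have h1 : (S * (Jmᵀ * Δ * Jm)).trace = (Bm * Δ).trace := by
      rw [show S * (Jmᵀ * Δ * Jm) = (S * Jmᵀ * Δ) * Jm by
        rw [← Matrix.mul_assoc, ← Matrix.mul_assoc]]
      rw [Matrix.trace_mul_comm]
      rw [show Jm * (S * Jmᵀ * Δ) = (Jm * S * Jmᵀ) * Δ by
        rw [← Matrix.mul_assoc, ← Matrix.mul_assoc]]
      rw [hblkB]
    rw [h1, hΔdef, Matrix.mul_sub, trace_sub, Matrix.mul_nonsing_inv Bm hBd.isUnit, trace_one]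
    simp [Fintype.card_coe]
    ring
  have hdet1 : (1 : Matrix ↥s ↥s ℝ) + Am * Δ = Am * Bm⁻¹ := by
    rw [hΔdef, Matrix.mul_sub, Matrix.mul_nonsing_inv Am hAd.isUnit]
    abel
  have hdetU : (blockUpdate S Q s).det = Q.det * (Am.det / Bm.det) := by
    rw [hBU]
    rw [show Q + Jmᵀ * Δ * Jm = Q * (1 + Q⁻¹ * (Jmᵀ * Δ * Jm)) by
      rw [Matrix.mul_add, Matrix.mul_one, ← Matrix.mul_assoc, Matrix.mul_nonsing_inv Q hQd,
        Matrix.one_mul]]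
    rw [det_mul]
    rw [show Q⁻¹ * (Jmᵀ * Δ * Jm) = (Q⁻¹ * Jmᵀ * Δ) * Jm by
      rw [← Matrix.mul_assoc, ← Matrix.mul_assoc]]
    rw [det_one_add_mul_comm]
    rw [show Jm * (Q⁻¹ * Jmᵀ * Δ) = (Jm * Q⁻¹ * Jmᵀ) * Δ by
      rw [← Matrix.mul_assoc, ← Matrix.mul_assoc]]
    rw [hblkA, hdet1, det_mul, det_nonsing_inv, div_eq_mul_inv]
    simp [Ring.inverse_eq_inv']
  have hlogU : Real.log (blockUpdate S Q s).det
      = Real.log Q.det + Real.log Am.det - Real.log Bm.det := by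
    rw [hdetU, Real.log_mul hQ.det_pos.ne' (by positivity), Real.log_div hAd hBd]
    ring
  have hdetBA : (Bm * Am⁻¹).det = Bm.det / Am.det := by
    rw [det_mul, det_nonsing_inv, div_eq_mul_inv]
    simp [Ring.inverse_eq_inv']
  have hlogBA : Real.log (Bm * Am⁻¹).det = Real.log Bm.det - Real.log Am.det := by
    rw [hdetBA, Real.log_div hBd hAd]
  have hmain : gaussLoss S Q - gaussLoss S (blockUpdate S Q s)
      = (Bm * Am⁻¹).trace - (s.card : ℝ) - Real.log (Bm * Am⁻¹).det := by
    unfold gaussLoss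
    rw [htr, hlogU, hlogBA]
    ring
  refine ⟨hmain, ?_⟩
  have hAi : Am⁻¹.PosDef := hAm.inv
  open scoped MatrixOrder in
  set C := CFC.sqrt Am⁻¹ with hCdef
  open scoped MatrixOrder in
  have hCh : C.IsHermitian := (CFC.sqrt_nonneg Am⁻¹).posSemidef.1
  open scoped MatrixOrder in
  have hCC : C * C = Am⁻¹ := CFC.sqrt_mul_sqrt_self Am⁻¹ hAi.posSemidef.nonneg
  have hCd : IsUnit C.det := by
    have h : C.det * C.det = Am⁻¹.det := by rw [← det_mul, hCC]
    refine isUnit_iff_ne_zero.mpr fun h0 => ?_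
    rw [h0, mul_zero] at h
    exact hAi.det_pos.ne' h.symm
  have hN : (C * Bm * C).PosDef := by
    have h := Stmt14Aux.posDef_conj hBm hCd
    rwa [hCh.eq] at h
  have htrN : (Bm * Am⁻¹).trace = (C * Bm * C).trace := by
    rw [← hCC, ← Matrix.mul_assoc, Matrix.trace_mul_comm, ← Matrix.mul_assoc]
  have hdetN : (Bm * Am⁻¹).det = (C * Bm * C).det := by
    rw [← hCC, det_mul, det_mul, det_mul, det_mul]
    ring
  have hfin := Stmt14Aux.trace_sub_log_det_nonneg hN
  rw [hmain, htrN, hdetN]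
  simpa [Fintype.card_coe] using hfin
end
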